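/- Let (μ_n) and μ be centred probability measures on ℝ such that μ_n converges weakly to μ and E[|X_{μ_n}|] → E[|X_μ|]. Then the barycentre functions converge: b_n(x) → b(x) at every continuity point x of b with x strictly below the upper limit of the support of μ. -/

import Mathlib

open MeasureTheory Set Filter

lemma aux_integral_max (x : ℝ) (ν : Measure ℝ) [IsProbabilityMeasure ν]
    (hi : Integrable id ν) (hc : (∫ y, y ∂ν) = 0) :
    (∫ y, max (y - x) 0 ∂ν) = (-x + ∫ y, |y - x| ∂ν) / 2 := by
  have hsub : Integrable (fun y => y - x) ν := by
    exact hi.sub (integrable_const x)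
  have habs : Integrable (fun y => |y - x|) ν := hsub.abs
  have h1 : (∫ y, y - x ∂ν) = -x := by
    have hi' : Integrable (fun y : ℝ => y) ν := hi
    rw [integral_sub hi' (integrable_const x)]
    simp [hc, integral_const]
  calc (∫ y, max (y - x) 0 ∂ν) = ∫ y, ((y - x) + |y - x|) / 2 ∂ν := by
        congr 1; funext y
        rcases le_total (y - x) 0 with h | h
        · rw [max_eq_right h, abs_of_nonpos h]; ring
        · rw [max_eq_left h, abs_of_nonneg h]; ring
    _ = ((∫ y, y - x ∂ν) + ∫ y, |y - x| ∂ν) / 2 := by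
        rw [integral_div, integral_add hsub habs]
    _ = (-x + ∫ y, |y - x| ∂ν) / 2 := by rw [h1]

theorem stmt_14 (μn : ℕ → Measure ℝ) (μ : Measure ℝ)
    [∀ n, IsProbabilityMeasure (μn n)] [IsProbabilityMeasure μ]
    (hintn : ∀ n, Integrable id (μn n)) (hcentn : ∀ n, (∫ x, x ∂μn n) = 0)
    (hint : Integrable id μ) (hcent : (∫ x, x ∂μ) = 0)
    (hweak : ∀ f : BoundedContinuousFunction ℝ ℝ,
      Tendsto (fun n => ∫ x, f x ∂μn n) atTop (nhds (∫ x, f x ∂μ)))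
    (habs : Tendsto (fun n => ∫ x, |x| ∂μn n) atTop (nhds (∫ x, |x| ∂μ)))
    (x : ℝ) (hatom : μ {x} = 0) (hsupp : 0 < μ (Ioi x)) :
    Tendsto (fun n => x + (∫ y, max (y - x) 0 ∂μn n) / ((μn n) (Ici x)).toReal)
      atTop (nhds (x + (∫ y, max (y - x) 0 ∂μ) / (μ (Ici x)).toReal)) := by
  -- The bounded continuous function y ↦ |y - x| - |y|
  set g : BoundedContinuousFunction ℝ ℝ :=
    BoundedContinuousFunction.mkOfBound
      ⟨fun y => |y - x| - |y|, by continuity⟩ (2 * |x|) (by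
        intro a b
        have h1 : ∀ y : ℝ, |(|y - x| - |y|)| ≤ |x| := by
          intro y
          calc |(|y - x| - |y|)| ≤ |(y - x) - y| := abs_abs_sub_abs_le_abs_sub _ _
            _ = |x| := by rw [show (y - x) - y = -x by ring, abs_neg]
        calc dist (|a - x| - |a|) (|b - x| - |b|)
            ≤ |(|a - x| - |a|)| + |(|b - x| - |b|)| := abs_sub _ _
          _ ≤ |x| + |x| := add_le_add (h1 a) (h1 b)
          _ = 2 * |x| := by ring) with hg
  have hgapp : ∀ y : ℝ, g y = |y - x| - |y| := fun y => rfl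
  -- convergence of ∫ |y - x|
  have habs' : Tendsto (fun n => ∫ y, |y - x| ∂μn n) atTop (nhds (∫ y, |y - x| ∂μ)) := by
    have hsubn : ∀ n, Integrable (fun y => |y - x|) (μn n) := fun n => by
      simpa using ((hintn n).sub (integrable_const x)).abs
    have hsub : Integrable (fun y => |y - x|) μ := by
      simpa using (hint.sub (integrable_const x)).abs
    have key : ∀ (ν : Measure ℝ) [IsProbabilityMeasure ν], Integrable id ν →
        (∫ y, g y ∂ν) = (∫ y, |y - x| ∂ν) - ∫ y, |y| ∂ν := by
      intro ν _ hi
      have h1 : Integrable (fun y => |y - x|) ν := by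
        simpa using (hi.sub (integrable_const x)).abs
      have h2 : Integrable (fun y : ℝ => |y|) ν := hi.abs
      simp only [hgapp]
      exact integral_sub h1 h2
    have keyn : ∀ n, (∫ y, g y ∂μn n) = (∫ y, |y - x| ∂μn n) - ∫ y, |y| ∂μn n :=
      fun n => key (μn n) (hintn n)
    have := (hweak g).add habs
    simp only [keyn, key μ hint] at this
    simpa using this
  -- convergence of numerators
  have hnum : Tendsto (fun n => ∫ y, max (y - x) 0 ∂μn n) atTop
      (nhds (∫ y, max (y - x) 0 ∂μ)) := by
    have e1 : ∀ n, (∫ y, max (y - x) 0 ∂μn n) = (-x + ∫ y, |y - x| ∂μn n) / 2 :=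
      fun n => aux_integral_max x (μn n) (hintn n) (hcentn n)
    simp only [e1, aux_integral_max x μ hint hcent]
    exact ((tendsto_const_nhds.add habs').div_const 2)
  -- convergence of denominators
  have hden : Tendsto (fun n => ((μn n) (Ici x)).toReal) atTop
      (nhds ((μ (Ici x)).toReal)) := by
    set P : ProbabilityMeasure ℝ := ⟨μ, inferInstance⟩
    set Pn : ℕ → ProbabilityMeasure ℝ := fun n => ⟨μn n, inferInstance⟩
    have hPlim : Tendsto Pn atTop (nhds P) := by
      rw [ProbabilityMeasure.tendsto_iff_forall_integral_tendsto]
      exact hweak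
    have hfr : (P : Measure ℝ) (frontier (Ici x)) = 0 := by
      rwa [frontier_Ici]
    have := ProbabilityMeasure.tendsto_measure_of_null_frontier_of_tendsto' hPlim hfr
    exact (ENNReal.tendsto_toReal (measure_ne_top μ _)).comp this
  have hne : ((μ (Ici x)).toReal) ≠ 0 := by
    have hle : μ (Ioi x) ≤ μ (Ici x) := measure_mono Ioi_subset_Ici_self
    have : 0 < μ (Ici x) := lt_of_lt_of_le hsupp hle
    exact (ENNReal.toReal_pos this.ne' (measure_ne_top μ _)).ne'
  exact tendsto_const_nhds.add (hnum.div hden hne)
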